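/- Let G be a 3-edge-colorable 3-regular graph and C a cut of G with |C| = 2 or |C| = 4. Then the subgraph of G induced by either shore of C is matchable (has a perfect matching). -/

import Mathlib

/-- The underlying simple graph of a multigraph given by `ends`. -/
def toSimple {V E : Type} (ends : E → Sym2 V) : SimpleGraph V where
  Adj u w := u ≠ w ∧ ∃ e, ends e = s(u, w)
  symm := by
    constructor
    rintro u w ⟨hne, e, he⟩
    exact ⟨hne.symm, e, by rw [he]; exact Sym2.eq_swap⟩
  loopless := by constructor; rintro u ⟨hne, -⟩; exact hne rfl

/-- The edge cut `∂(X)`. -/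
def Cut {V E : Type} (ends : E → Sym2 V) (X : Set V) : Set E :=
  {e | ∃ u ∈ X, ∃ w, w ∉ X ∧ ends e = s(u, w)}

/-- Degree of a vertex (counting multiplicities). -/
noncomputable def deg {V E : Type} (ends : E → Sym2 V) (v : V) : ℕ :=
  {e | v ∈ ends e}.ncard

/-- `G` is 3-connected: connected, and removing any set of at most two vertices
(that does not remove everything) leaves it connected. -/
def ThreeConnected {V E : Type} (ends : E → Sym2 V) : Prop :=
  (toSimple ends).Connected ∧
    ∀ S : Set V, S.ncard ≤ 2 → Sᶜ.Nonempty → ((toSimple ends).induce Sᶜ).Connected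

/-- A proper edge coloring: edges sharing a vertex get different colors. -/
def Proper {V E : Type} (ends : E → Sym2 V) {r : ℕ} (c : E → Fin r) : Prop :=
  ∀ e f, e ≠ f → (∃ v, v ∈ ends e ∧ v ∈ ends f) → c e ≠ c f

/-- The subgraph induced by `X` is matchable: some set of edges with both ends
in `X` covers every vertex of `X` exactly once. -/
def InducedMatchable {V E : Type} (ends : E → Sym2 V) (X : Set V) : Prop :=
  ∃ M : Set E, (∀ e ∈ M, ∀ w ∈ ends e, w ∈ X) ∧ ∀ v ∈ X, ∃! e, e ∈ M ∧ v ∈ ends e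

section
open scoped Classical

open Finset in
/-- At each vertex there is exactly one edge of each color. -/
lemma exists_unique_color' {V E : Type} [Fintype V] [Fintype E]
    (ends : E → Sym2 V) (hreg : ∀ v, deg ends v = 3)
    {c : E → Fin 3} (hc : Proper ends c) (v : V) (i : Fin 3) :
    ∃! e, v ∈ ends e ∧ c e = i := by
  classical
  set S : Finset E := Finset.univ.filter (fun e => v ∈ ends e) with hS
  have hmemS : ∀ e, e ∈ S ↔ v ∈ ends e := by intro e; simp [hS]
  have hcard : S.card = 3 := by
    have h := hreg v
    rw [deg, show {e | v ∈ ends e} = (S : Set E) by ext e; simp [hmemS],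
      Set.ncard_coe_finset] at h
    exact h
  have hinj : Set.InjOn c (S : Set E) := by
    intro e he f hf hef
    by_contra hne
    exact hc e f hne ⟨v, (hmemS e).mp (by exact_mod_cast he),
      (hmemS f).mp (by exact_mod_cast hf)⟩ hef
  have himg : S.image c = Finset.univ := by
    apply Finset.eq_univ_of_card
    rw [Finset.card_image_of_injOn hinj, hcard]
    simp
  have hi : i ∈ S.image c := by rw [himg]; exact Finset.mem_univ i
  obtain ⟨e, heS, hei⟩ := Finset.mem_image.mp hi
  refine ⟨e, ⟨(hmemS e).mp heS, hei⟩, ?_⟩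
  rintro f ⟨hf, hfi⟩
  exact hinj (by exact_mod_cast (hmemS f).mpr hf) (by exact_mod_cast heS)
    (hfi.trans hei.symm)

open Finset in
/-- Parity: for a perfect matching `M`, `|X| ≡ |M ∩ ∂X| (mod 2)`. -/
lemma parity_lemma' {V E : Type} [Fintype V] [Fintype E]
    (ends : E → Sym2 V) (hloop : ∀ e, ¬ (ends e).IsDiag)
    (M : Finset E) (hM : ∀ v : V, ∃! e, e ∈ M ∧ v ∈ ends e) (X : Set V) :
    (Finset.univ.filter (· ∈ X)).card % 2
      = (M.filter (· ∈ Cut ends X)).card % 2 := by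
  classical
  set XF : Finset V := Finset.univ.filter (· ∈ X) with hXF
  set φ : V → E := fun v => (hM v).choose with hφ
  have hφM : ∀ v, φ v ∈ M := fun v => (hM v).choose_spec.1.1
  have hφe : ∀ v, v ∈ ends (φ v) := fun v => (hM v).choose_spec.1.2
  have hφu : ∀ v e, e ∈ M → v ∈ ends e → e = φ v :=
    fun v e he hv => (hM v).choose_spec.2 e ⟨he, hv⟩
  have h1 : XF.card = ∑ e ∈ M, (XF.filter (fun v => φ v = e)).card :=
    Finset.card_eq_sum_card_fiberwise (fun v _ => hφM v)
  have hfib : ∀ e ∈ M, XF.filter (fun v => φ v = e)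
      = XF.filter (fun v => v ∈ ends e) := by
    intro e he
    ext v
    simp only [Finset.mem_filter]
    constructor
    · rintro ⟨hv, rfl⟩; exact ⟨hv, hφe v⟩
    · rintro ⟨hv, hve⟩; exact ⟨hv, (hφu v e he hve).symm⟩
  rw [Finset.sum_congr rfl (fun e he => by rw [hfib e he])] at h1
  set f : E → ℕ := fun e => (XF.filter (fun v => v ∈ ends e)).card with hf
  have hsplit : ∑ e ∈ M, f e
      = ∑ e ∈ M.filter (· ∈ Cut ends X), f e
        + ∑ e ∈ M.filter (fun e => ¬ e ∈ Cut ends X), f e :=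
    (Finset.sum_filter_add_sum_filter_not M _ f).symm
  have hcut : ∀ e ∈ M.filter (· ∈ Cut ends X), f e = 1 := by
    intro e he
    obtain ⟨u, hu, w, hw, h⟩ := (Finset.mem_filter.mp he).2
    have hne : u ≠ w := by
      intro h'
      exact hloop e (by rw [h, h']; simp)
    have : XF.filter (fun v => v ∈ ends e) = {u} := by
      ext v
      simp only [Finset.mem_filter, Finset.mem_singleton, hXF, Finset.mem_univ,
        true_and, h, Sym2.mem_iff]
      constructor
      · rintro ⟨hv, rfl | rfl⟩
        · rfl
        · exact absurd hv hw
      · rintro rfl; exact ⟨hu, Or.inl rfl⟩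
    simp [hf, this]
  have hncut : ∀ e ∈ M.filter (fun e => ¬ e ∈ Cut ends X), f e % 2 = 0 := by
    intro e he
    obtain ⟨he1, he2⟩ := Finset.mem_filter.mp he
    obtain ⟨u, w, h⟩ := Sym2.exists.mp ⟨ends e, rfl⟩
    have hne : u ≠ w := by
      intro h'
      exact hloop e (by rw [h, h']; simp)
    by_cases hu : u ∈ X
    · have hwX : w ∈ X := by
        by_contra hw
        exact he2 ⟨u, hu, w, hw, h⟩
      have : XF.filter (fun v => v ∈ ends e) = {u, w} := by
        ext v
        simp only [Finset.mem_filter, Finset.mem_insert, Finset.mem_singleton,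
          hXF, Finset.mem_univ, true_and, h, Sym2.mem_iff]
        constructor
        · rintro ⟨_, hv⟩; exact hv
        · rintro (rfl | rfl)
          · exact ⟨hu, Or.inl rfl⟩
          · exact ⟨hwX, Or.inr rfl⟩
      simp [hf, this, Finset.card_pair hne]
    · have hwX : w ∉ X := by
        intro hw
        exact he2 ⟨w, hw, u, hu, h.trans Sym2.eq_swap⟩
      have : XF.filter (fun v => v ∈ ends e) = ∅ := by
        ext v
        simp only [Finset.mem_filter, Finset.notMem_empty, iff_false, hXF,
          Finset.mem_univ, true_and, h, Sym2.mem_iff, not_and]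
        rintro hv (rfl | rfl)
        · exact hu hv
        · exact hwX hv
      simp [hf, this]
  have hsum1 : ∑ e ∈ M.filter (· ∈ Cut ends X), f e
      = (M.filter (· ∈ Cut ends X)).card := by
    rw [Finset.sum_congr rfl hcut]; simp
  have hsum2 : (∑ e ∈ M.filter (fun e => ¬ e ∈ Cut ends X), f e) % 2 = 0 := by
    rw [Finset.sum_nat_mod, Finset.sum_congr rfl hncut]
    simp
  rw [h1, hsplit]
  omega

/-- The cut of the complement is the same set of edges. -/
lemma cut_compl' {V E : Type} (ends : E → Sym2 V) (X : Set V) :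
    Cut ends Xᶜ = Cut ends X := by
  ext e
  constructor
  · rintro ⟨u, hu, w, hw, h⟩
    exact ⟨w, by simpa using hw, u, by simpa using hu, h.trans Sym2.eq_swap⟩
  · rintro ⟨u, hu, w, hw, h⟩
    exact ⟨w, hw, u, by simpa using hu, h.trans Sym2.eq_swap⟩

/-- If a color class avoids the cut, its restriction matches the shore. -/
lemma matchable_aux' {V E : Type} (ends : E → Sym2 V)
    (hloop : ∀ e, ¬ (ends e).IsDiag) {c : E → Fin 3} {i : Fin 3}
    (hA : ∀ v, ∃! e, v ∈ ends e ∧ c e = i)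
    (X : Set V) (hno : ∀ e, c e = i → e ∉ Cut ends X) :
    InducedMatchable ends X := by
  refine ⟨{e | c e = i ∧ ∀ w ∈ ends e, w ∈ X}, ?_, ?_⟩
  · rintro e ⟨_, h⟩ w hw; exact h w hw
  · intro v hv
    obtain ⟨e, ⟨hve, hci⟩, huniq⟩ := hA v
    have hins : ∀ w ∈ ends e, w ∈ X := by
      intro w hw
      by_contra hwX
      have hvw : v ≠ w := fun h' => hwX (h' ▸ hv)
      obtain ⟨a, b, h⟩ := Sym2.exists.mp ⟨ends e, rfl⟩
      have hsw : ends e = s(v, w) := by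
        rw [h] at hve hw ⊢
        rw [Sym2.mem_iff] at hve hw
        rcases hve with rfl | rfl <;> rcases hw with rfl | rfl
        · exact absurd rfl hvw
        · rfl
        · exact Sym2.eq_swap
        · exact absurd rfl hvw
      exact hno e hci ⟨v, hv, w, hwX, hsw⟩
    refine ⟨e, ⟨⟨hci, hins⟩, hve⟩, ?_⟩
    rintro f ⟨⟨hfi, _⟩, hvf⟩
    exact huniq f ⟨hvf, hfi⟩

end

/-- In a 3-edge-colorable 3-regular loopless multigraph, if `C = ∂(X)` is a cut
with `|C| = 2` or `|C| = 4`, then the subgraph induced by either shore of `C`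
has a perfect matching. -/
theorem stmt19 {V E : Type} [Fintype V] [Fintype E]
    (ends : E → Sym2 V) (hloop : ∀ e, ¬ (ends e).IsDiag)
    (hreg : ∀ v, deg ends v = 3)
    (hcol : ∃ c : E → Fin 3, Proper ends c)
    (X : Set V) (hC : (Cut ends X).ncard = 2 ∨ (Cut ends X).ncard = 4) :
    InducedMatchable ends X ∧ InducedMatchable ends Xᶜ := by
  classical
  obtain ⟨c, hc⟩ := hcol
  have hA : ∀ i : Fin 3, ∀ v, ∃! e, v ∈ ends e ∧ c e = i :=
    fun i v => exists_unique_color' ends hreg hc v i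
  set Mi : Fin 3 → Finset E := fun i => Finset.univ.filter (fun e => c e = i) with hMi
  have hMatch : ∀ i : Fin 3, ∀ v : V, ∃! e, e ∈ Mi i ∧ v ∈ ends e := by
    intro i v
    obtain ⟨e, ⟨hve, hci⟩, hu⟩ := hA i v
    refine ⟨e, ⟨by simp [hMi, hci], hve⟩, ?_⟩
    rintro f ⟨hf, hvf⟩
    exact hu f ⟨hvf, by simpa [hMi] using hf⟩
  set ni : Fin 3 → ℕ := fun i => ((Mi i).filter (· ∈ Cut ends X)).card with hni
  have hpar : ∀ i, (Finset.univ.filter (· ∈ X)).card % 2 = ni i % 2 :=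
    fun i => parity_lemma' ends hloop (Mi i) (hMatch i) X
  set CutF : Finset E := Finset.univ.filter (· ∈ Cut ends X) with hCutF
  have hCtot : CutF.card = ∑ i : Fin 3, ni i := by
    rw [Finset.card_eq_sum_card_fiberwise (f := c)
      (fun e _ => Finset.mem_univ (c e))]
    refine Finset.sum_congr rfl fun i _ => ?_
    congr 1
    ext e
    simp [hCutF, hMi, and_comm]
  have hCval : CutF.card = 2 ∨ CutF.card = 4 := by
    have : Cut ends X = (CutF : Set E) := by ext e; simp [hCutF]
    rwa [this, Set.ncard_coe_finset] at hC
  have hex : ∃ i, ni i = 0 := by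
    have h01 := (hpar 0).symm.trans (hpar 1)
    have h02 := (hpar 0).symm.trans (hpar 2)
    rw [Fin.sum_univ_three] at hCtot
    have : ni 0 = 0 ∨ ni 1 = 0 ∨ ni 2 = 0 := by omega
    rcases this with h | h | h
    exacts [⟨0, h⟩, ⟨1, h⟩, ⟨2, h⟩]
  obtain ⟨i, hi⟩ := hex
  have hno : ∀ e, c e = i → e ∉ Cut ends X := by
    intro e hci hcut
    have : e ∈ (Mi i).filter (· ∈ Cut ends X) := by
      simp [hMi, hci, hcut]
    rw [Finset.card_eq_zero.mp hi] at this
    exact absurd this (Finset.notMem_empty e)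
  have hno' : ∀ e, c e = i → e ∉ Cut ends Xᶜ := by
    rw [cut_compl' ends X]; exact hno
  exact ⟨matchable_aux' ends hloop (hA i) X hno,
    matchable_aux' ends hloop (hA i) Xᶜ hno'⟩
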